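/- Let v_1,...,v_N : [−τ̄, ∞) → ℝ^d be C¹, let τ : [0,∞) → [0, τ̄] and suppose 0 ≤ ψ_{ij}(t) ≤ 1 for all i,j,t. If for each i and t > 0, v̇_i(t) = (λ/N) Σ_{j≠i} ψ_{ij}(t−τ(t)) (v_j(t−τ(t)) − v_i(t)), then setting w_i(t) = v_i(t) − (1/N)Σ_k v_k(t), one has for every t > 0: (1/N) Σ_{i=1}^N |v̇_i(t)|² ≤ (4λ²/N) Σ_{i=1}^N |w_i(t)|² + 2λ² τ̄ · (1/N) ∫_{t−τ(t)}^t Σ_{i=1}^N |v̇_i(s)|² ds. -/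

import Mathlib

open scoped BigOperators
open Finset

open MeasureTheory in
lemma aux_sq_integral_le {f : ℝ → ℝ} (hf : Continuous f) (hf0 : ∀ x, 0 ≤ f x)
    {a b : ℝ} (hab : a ≤ b) :
    (∫ s in a..b, f s) ^ 2 ≤ (b - a) * ∫ s in a..b, f s ^ 2 := by
  have hpq : Real.HolderConjugate 2 2 := ⟨by norm_num, by norm_num, by norm_num⟩
  set μ := volume.restrict (Set.Ioc a b) with hμ
  have hfin : IsFiniteMeasure μ := by
    constructor
    rw [hμ, Measure.restrict_apply_univ, Real.volume_Ioc]
    exact ENNReal.ofReal_lt_top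
  obtain ⟨C, hC⟩ := (isCompact_Icc : IsCompact (Set.Icc a b)).exists_bound_of_continuousOn
    hf.continuousOn
  have hbd : ∀ᵐ x ∂μ, ‖f x‖ ≤ C := by
    rw [hμ, ae_restrict_iff' measurableSet_Ioc]
    exact ae_of_all _ fun x hx => hC x (Set.Ioc_subset_Icc_self hx)
  have hmem : MemLp f (ENNReal.ofReal 2) μ :=
    MemLp.of_bound hf.aestronglyMeasurable.restrict C hbd
  have h1 : MemLp (fun _ : ℝ => (1 : ℝ)) (ENNReal.ofReal 2) μ := memLp_const 1
  have key := integral_mul_le_Lp_mul_Lq_of_nonneg hpq (ae_of_all _ hf0)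
    (ae_of_all _ fun _ => zero_le_one) hmem h1
  simp only [mul_one, Real.one_rpow] at key
  have hone : ∫ _ : ℝ, (1 : ℝ) ∂μ = b - a := by
    simp [hμ, Real.volume_Ioc, ENNReal.toReal_ofReal (sub_nonneg.2 hab), hab]
  rw [hone] at key
  have hrp : ∀ x : ℝ, f x ^ (2 : ℝ) = f x ^ 2 := fun x => by
    rw [show (2:ℝ) = ((2:ℕ):ℝ) by norm_num, Real.rpow_natCast]
  simp only [hrp] at key
  have hint : ∫ x, f x ∂μ = ∫ s in a..b, f s := by
    rw [intervalIntegral.integral_of_le hab]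
  have hint2 : ∫ x, f x ^ 2 ∂μ = ∫ s in a..b, f s ^ 2 := by
    rw [intervalIntegral.integral_of_le hab]
  rw [hint, hint2] at key
  have hA : 0 ≤ ∫ s in a..b, f s := intervalIntegral.integral_nonneg hab fun x _ => hf0 x
  have hB : 0 ≤ ∫ s in a..b, f s ^ 2 := intervalIntegral.integral_nonneg hab fun x _ => sq_nonneg _
  have hsq : ∀ x : ℝ, 0 ≤ x → (x ^ ((1:ℝ)/2)) ^ 2 = x := fun x hx => by
    rw [← Real.rpow_natCast (x ^ ((1:ℝ)/2)) 2, ← Real.rpow_mul hx]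
    norm_num
  calc (∫ s in a..b, f s) ^ 2
      ≤ ((∫ s in a..b, f s ^ 2) ^ ((1:ℝ)/2) * (b - a) ^ ((1:ℝ)/2)) ^ 2 :=
        pow_le_pow_left₀ hA key 2
    _ = (b - a) * ∫ s in a..b, f s ^ 2 := by
        rw [mul_pow, hsq _ hB, hsq _ (sub_nonneg.2 hab)]; ring

lemma aux_sum_sum_le {N d : ℕ} (w : Fin N → EuclideanSpace ℝ (Fin d)) :
    ∑ i, ∑ j, ‖w j - w i‖ ^ 2 ≤ 2 * N * ∑ i, ‖w i‖ ^ 2 := by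
  have hexp : ∀ i j : Fin N, ‖w j - w i‖ ^ 2
      = ‖w j‖ ^ 2 - 2 * (inner ℝ (w j) (w i) : ℝ) + ‖w i‖ ^ 2 :=
    fun i j => norm_sub_sq_real _ _
  have hs : ∑ i : Fin N, ∑ j : Fin N, (inner ℝ (w j) (w i) : ℝ) = ‖∑ i, w i‖ ^ 2 := by
    rw [← real_inner_self_eq_norm_sq, sum_inner]
    simp_rw [inner_sum]
    exact Finset.sum_comm
  have key : ∑ i, ∑ j, ‖w j - w i‖ ^ 2
      = 2 * N * ∑ i, ‖w i‖ ^ 2 - 2 * ‖∑ i, w i‖ ^ 2 := by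
    simp_rw [hexp]
    rw [← hs]
    simp only [Finset.sum_add_distrib, Finset.sum_sub_distrib, Finset.sum_const,
      Finset.card_univ, Fintype.card_fin, nsmul_eq_mul, Finset.mul_sum, ← Finset.sum_mul]
    ring_nf
    rw [Finset.sum_mul]
    congr 1
    · ring
  have := sq_nonneg ‖∑ i, w i‖
  linarith

theorem delayed_velocity_derivative_bound (N d : ℕ) (hN : 1 ≤ N) (hd : 1 ≤ d)
    (lam τbar : ℝ) (hlam : 0 ≤ lam) (hτbar : 0 < τbar)
    (v : Fin N → ℝ → EuclideanSpace ℝ (Fin d)) (hv : ∀ i, ContDiff ℝ 1 (v i))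
    (τ : ℝ → ℝ) (hτ : ∀ t, 0 ≤ τ t ∧ τ t ≤ τbar)
    (ψ : Fin N → Fin N → ℝ → ℝ) (hψ : ∀ i j t, 0 ≤ ψ i j t ∧ ψ i j t ≤ 1)
    (hode : ∀ i t, 0 < t → deriv (v i) t
      = (lam / N) • ∑ j ∈ univ.erase i, ψ i j (t - τ t) • (v j (t - τ t) - v i t))
    (t : ℝ) (ht : 0 < t) :
    (1 / (N : ℝ)) * ∑ i, ‖deriv (v i) t‖ ^ 2
      ≤ (4 * lam ^ 2 / N) * ∑ i, ‖v i t - (1 / (N : ℝ)) • ∑ k, v k t‖ ^ 2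
        + 2 * lam ^ 2 * τbar *
          ((1 / (N : ℝ)) * ∫ s in (t - τ t)..t, ∑ i, ‖deriv (v i) s‖ ^ 2) := by
  have hn : (0:ℝ) < (N:ℝ) := by exact_mod_cast Nat.lt_of_lt_of_le Nat.zero_lt_one hN
  obtain ⟨hτ0, hτb⟩ := hτ t
  set a := t - τ t with ha
  have hab : a ≤ t := by rw [ha]; linarith
  have hta : t - a ≤ τbar := by rw [ha]; linarith
  have hDc : ∀ i, Continuous (deriv (v i)) := fun i => (hv i).continuous_deriv le_rfl
  have hftc : ∀ j, v j t - v j a = ∫ s in a..t, deriv (v j) s := fun j =>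
    (intervalIntegral.integral_deriv_eq_sub
      (fun x _ => ((hv j).differentiable one_ne_zero).differentiableAt)
      ((hDc j).intervalIntegrable _ _)).symm
  set I : ℝ := ∫ s in a..t, ∑ i, ‖deriv (v i) s‖ ^ 2 with hI
  set P : Fin N → ℝ := fun i => ∑ j, ‖v j t - v i t‖ with hP
  set Q : ℝ := ∑ j, ∫ s in a..t, ‖deriv (v j) s‖ with hQ
  have hIsum : I = ∑ j, ∫ s in a..t, ‖deriv (v j) s‖ ^ 2 := by
    rw [hI]
    exact intervalIntegral.integral_finset_sum
      (fun j _ => (((hDc j).norm.pow 2).intervalIntegrable _ _))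
  have hQ0 : 0 ≤ Q := Finset.sum_nonneg fun j _ =>
    intervalIntegral.integral_nonneg hab fun x _ => norm_nonneg _
  have hP0 : ∀ i, 0 ≤ P i := fun i => Finset.sum_nonneg fun j _ => norm_nonneg _
  have hjint : ∀ j : Fin N, (∫ s in a..t, ‖deriv (v j) s‖) ^ 2
      ≤ τbar * ∫ s in a..t, ‖deriv (v j) s‖ ^ 2 := fun j => by
    have h1 := aux_sq_integral_le (hDc j).norm (fun x => norm_nonneg _) hab
    have h2 : 0 ≤ ∫ s in a..t, ‖deriv (v j) s‖ ^ 2 :=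
      intervalIntegral.integral_nonneg hab fun x _ => sq_nonneg _
    exact h1.trans (mul_le_mul_of_nonneg_right hta h2)
  have hQI : Q ^ 2 ≤ (N:ℝ) * τbar * I := by
    calc Q ^ 2 ≤ (N:ℝ) * ∑ j, (∫ s in a..t, ‖deriv (v j) s‖) ^ 2 := by
          simpa [Finset.card_univ] using
            sq_sum_le_card_mul_sum_sq (s := (univ : Finset (Fin N)))
              (f := fun j => ∫ s in a..t, ‖deriv (v j) s‖)
      _ ≤ (N:ℝ) * ∑ j, τbar * ∫ s in a..t, ‖deriv (v j) s‖ ^ 2 :=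
          mul_le_mul_of_nonneg_left (Finset.sum_le_sum fun j _ => hjint j) hn.le
      _ = (N:ℝ) * τbar * I := by rw [hIsum, ← Finset.mul_sum]; ring
  have h1 : ∀ i, ‖deriv (v i) t‖ ≤ (lam / N) * (P i + Q) := by
    intro i
    rw [hode i t ht, ← ha, norm_smul, Real.norm_of_nonneg (div_nonneg hlam hn.le)]
    refine mul_le_mul_of_nonneg_left ?_ (div_nonneg hlam hn.le)
    calc ‖∑ j ∈ univ.erase i, ψ i j a • (v j a - v i t)‖
        ≤ ∑ j ∈ univ.erase i, ‖ψ i j a • (v j a - v i t)‖ := norm_sum_le _ _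
      _ ≤ ∑ j ∈ univ.erase i, ‖v j a - v i t‖ := by
          refine Finset.sum_le_sum fun j _ => ?_
          rw [norm_smul, Real.norm_eq_abs, abs_of_nonneg (hψ i j a).1]
          exact mul_le_of_le_one_left (norm_nonneg _) (hψ i j a).2
      _ ≤ ∑ j, ‖v j a - v i t‖ :=
          Finset.sum_le_sum_of_subset_of_nonneg (Finset.erase_subset _ _)
            (fun j _ _ => norm_nonneg _)
      _ ≤ ∑ j, (‖v j t - v i t‖ + ∫ s in a..t, ‖deriv (v j) s‖) := by
          refine Finset.sum_le_sum fun j _ => ?_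
          have hre : v j a - v i t = (v j t - v i t) - (v j t - v j a) := by abel
          rw [hre]
          refine (norm_sub_le _ _).trans ?_
          rw [hftc j]
          exact add_le_add_right (intervalIntegral.norm_integral_le_integral_norm hab) _
      _ = P i + Q := by rw [Finset.sum_add_distrib]
  have h2 : ∀ i, ‖deriv (v i) t‖ ^ 2
      ≤ 2 * (lam / N) ^ 2 * ((N:ℝ) * ∑ j, ‖v j t - v i t‖ ^ 2 + (N:ℝ) * τbar * I) := by
    intro i
    have hp : P i ^ 2 ≤ (N:ℝ) * ∑ j, ‖v j t - v i t‖ ^ 2 := by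
      simpa [Finset.card_univ] using
        sq_sum_le_card_mul_sum_sq (s := (univ : Finset (Fin N)))
          (f := fun j => ‖v j t - v i t‖)
    calc ‖deriv (v i) t‖ ^ 2 ≤ ((lam / N) * (P i + Q)) ^ 2 :=
          pow_le_pow_left₀ (norm_nonneg _) (h1 i) 2
      _ = (lam / N) ^ 2 * (P i + Q) ^ 2 := by ring
      _ ≤ (lam / N) ^ 2 * (2 * P i ^ 2 + 2 * Q ^ 2) :=
          mul_le_mul_of_nonneg_left (by nlinarith [sq_nonneg (P i - Q)]) (sq_nonneg _)
      _ ≤ (lam / N) ^ 2 * (2 * ((N:ℝ) * ∑ j, ‖v j t - v i t‖ ^ 2) + 2 * ((N:ℝ) * τbar * I)) :=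
          mul_le_mul_of_nonneg_left (by linarith) (sq_nonneg _)
      _ = 2 * (lam / N) ^ 2 * ((N:ℝ) * ∑ j, ‖v j t - v i t‖ ^ 2 + (N:ℝ) * τbar * I) := by ring
  set w : Fin N → EuclideanSpace ℝ (Fin d) := fun i => v i t - (1 / (N:ℝ)) • ∑ k, v k t with hw
  have hvw : ∀ i j : Fin N, v j t - v i t = w j - w i := fun i j => by
    rw [hw]; exact (sub_sub_sub_cancel_right _ _ _).symm
  have hWW : ∑ i, ∑ j, ‖v j t - v i t‖ ^ 2 ≤ 2 * (N:ℝ) * ∑ i, ‖w i‖ ^ 2 := by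
    simp_rw [hvw]
    exact aux_sum_sum_le w
  have hI0 : 0 ≤ I := by
    rw [hI]
    exact intervalIntegral.integral_nonneg hab fun x _ =>
      Finset.sum_nonneg fun i _ => sq_nonneg _
  have hL : ∑ i, ‖deriv (v i) t‖ ^ 2 ≤ 4 * lam ^ 2 * ∑ i, ‖w i‖ ^ 2 + 2 * lam ^ 2 * τbar * I := by
    calc ∑ i, ‖deriv (v i) t‖ ^ 2
        ≤ ∑ i, 2 * (lam / N) ^ 2 * ((N:ℝ) * ∑ j, ‖v j t - v i t‖ ^ 2 + (N:ℝ) * τbar * I) :=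
          Finset.sum_le_sum fun i _ => h2 i
      _ = 2 * (lam / N) ^ 2 * ((N:ℝ) * ∑ i, ∑ j, ‖v j t - v i t‖ ^ 2
            + (N:ℝ) * ((N:ℝ) * τbar * I)) := by
          rw [← Finset.mul_sum, Finset.sum_add_distrib, ← Finset.mul_sum, Finset.sum_const,
            Finset.card_univ, Fintype.card_fin, nsmul_eq_mul]
      _ ≤ 2 * (lam / N) ^ 2 * ((N:ℝ) * (2 * (N:ℝ) * ∑ i, ‖w i‖ ^ 2)
            + (N:ℝ) * ((N:ℝ) * τbar * I)) := by
          refine mul_le_mul_of_nonneg_left ?_ (by positivity)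
          exact add_le_add_left (mul_le_mul_of_nonneg_left hWW hn.le) _
      _ = 4 * lam ^ 2 * ∑ i, ‖w i‖ ^ 2 + 2 * lam ^ 2 * τbar * I := by
          field_simp
          ring
  calc (1 / (N:ℝ)) * ∑ i, ‖deriv (v i) t‖ ^ 2
      ≤ (1 / (N:ℝ)) * (4 * lam ^ 2 * ∑ i, ‖w i‖ ^ 2 + 2 * lam ^ 2 * τbar * I) :=
        mul_le_mul_of_nonneg_left hL (by positivity)
    _ = (4 * lam ^ 2 / N) * ∑ i, ‖w i‖ ^ 2 + 2 * lam ^ 2 * τbar * ((1 / (N:ℝ)) * I) := by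
        field_simp
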